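/- Let 𝔸 be an algebra, n ≥ 2, and θ_0, …, θ_{n−1} congruences. The following are equivalent: (1) ⟨x,y⟩ ∈ [θ_0,…,θ_{n−1}]_H; (2) the commutator cube com_n(x,y) lies in Δ(θ_0,…,θ_{n−1}); (3) there exists i ∈ n such that ⟨x,y⟩ is (i)-supported by some γ ∈ Δ(θ_0,…,θ_{n−1}). Consequently, the hypercommutator is symmetric: [θ_0,…,θ_{n−1}]_H = [θ_{σ(0)},…,θ_{σ(n−1)}]_H for every permutation σ. -/

import Mathlib

universe u v

structure Signature : Type 1 where
  ops : Type
  arity : ops → ℕ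

class Alg (σ : Signature) (A : Type u) : Type u where
  interp : ∀ o : σ.ops, (Fin (σ.arity o) → A) → A

/-- A labeled `S`-dimensional cube with vertices labeled by elements of `A`. -/
abbrev Cube (S : Type v) (A : Type u) : Type (max u v) := (S → Bool) → A

section Defs

variable {A : Type u} {B : Type u} {S : Type v}

def Quasireflexive (R : Set (B × B)) : Prop :=
  ∀ a b : B, (a, b) ∈ R → (a, a) ∈ R ∧ (b, b) ∈ R

def SymmRel (R : Set (B × B)) : Prop := ∀ a b : B, (a, b) ∈ R → (b, a) ∈ R

def TransRel (R : Set (B × B)) : Prop :=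
  ∀ a b c : B, (a, b) ∈ R → (b, c) ∈ R → (a, c) ∈ R

def face [DecidableEq S] (i : S) (b : Bool) (γ : Cube S A) : Cube {x : S // x ≠ i} A :=
  fun f => γ fun j => if h : j = i then b else f ⟨j, h⟩

def facesRel [DecidableEq S] (i : S) (R : Set (Cube S A)) :
    Set (Cube {x : S // x ≠ i} A × Cube {x : S // x ≠ i} A) :=
  {p | ∃ γ ∈ R, p = (face i false γ, face i true γ)}

def SRefl [DecidableEq S] (R : Set (Cube S A)) : Prop := ∀ i : S, Quasireflexive (facesRel i R)
def SSymm [DecidableEq S] (R : Set (Cube S A)) : Prop := ∀ i : S, SymmRel (facesRel i R)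
def STrans [DecidableEq S] (R : Set (Cube S A)) : Prop := ∀ i : S, TransRel (facesRel i R)

def glue (i : S) (a b : Cube {x : S // x ≠ i} A) : Cube S A :=
  fun f => if f i then b (fun j => f j.val) else a (fun j => f j.val)

def reflMap [DecidableEq S] (i : S) (b : Bool) (γ : Cube S A) : Cube S A :=
  glue i (face i b γ) (face i b γ)

def symMap [DecidableEq S] (i : S) (γ : Cube S A) : Cube S A :=
  glue i (face i true γ) (face i false γ)

def cut (Q : Set S) [DecidablePred (· ∈ Q)] (γ : Cube S A) :
    Cube {x : S // x ∈ Q} (Cube {x : S // x ∉ Q} A) :=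
  fun f g => γ fun j => if h : j ∈ Q then f ⟨j, h⟩ else g ⟨j, h⟩

def cutProj (Q : Set S) [DecidablePred (· ∈ Q)] (R : Set (Cube S A))
    (f : {x : S // x ∈ Q} → Bool) : Set (Cube {x : S // x ∉ Q} A) :=
  (fun γ => cut Q γ f) '' R

variable (σ : Signature)

def CompatCube [Alg σ A] (R : Set (Cube S A)) : Prop :=
  ∀ (o : σ.ops) (γ : Fin (σ.arity o) → Cube S A), (∀ k, γ k ∈ R) →
    (fun f => Alg.interp (A := A) o fun k => γ k f) ∈ R

def CompatRel [Alg σ A] (θ : Set (A × A)) : Prop :=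
  ∀ (o : σ.ops) (x y : Fin (σ.arity o) → A), (∀ k, (x k, y k) ∈ θ) →
    (Alg.interp (A := A) o x, Alg.interp (A := A) o y) ∈ θ

def IsCongruence [Alg σ A] (θ : Set (A × A)) : Prop :=
  (∀ a : A, (a, a) ∈ θ) ∧ SymmRel θ ∧ TransRel θ ∧ CompatRel σ θ

def IsTolerance [Alg σ A] [DecidableEq S] (R : Set (Cube S A)) : Prop :=
  CompatCube σ R ∧ SRefl R ∧ SSymm R

def IsHCongruence [Alg σ A] [DecidableEq S] (R : Set (Cube S A)) : Prop :=
  IsTolerance σ R ∧ STrans R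

def subalgGen [Alg σ A] (X : Set (Cube S A)) : Set (Cube S A) :=
  ⋂₀ {R : Set (Cube S A) | CompatCube σ R ∧ X ⊆ R}

def tolGen [Alg σ A] [DecidableEq S] (X : Set (Cube S A)) : Set (Cube S A) :=
  ⋂₀ {R : Set (Cube S A) | IsTolerance σ R ∧ X ⊆ R}

def congGen [Alg σ A] [DecidableEq S] (X : Set (Cube S A)) : Set (Cube S A) :=
  ⋂₀ {R : Set (Cube S A) | IsHCongruence σ R ∧ X ⊆ R}

def cubeAt (i : S) (p : A × A) : Cube S A := fun f => bif f i then p.2 else p.1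

def cubeSet (i : S) (θ : Set (A × A)) : Set (Cube S A) := cubeAt i '' θ

def MRel [Alg σ A] [DecidableEq S] (θ : S → Set (A × A)) : Set (Cube S A) :=
  tolGen σ (⋃ i : S, cubeSet i (θ i))

def DeltaRel [Alg σ A] [DecidableEq S] (θ : S → Set (A × A)) : Set (Cube S A) :=
  congGen σ (⋃ i : S, cubeSet i (θ i))

def rectRel [DecidableEq S] (θ : S → Set (A × A)) : Set (Cube S A) :=
  {γ | ∀ (i : S) (f : {x : S // x ≠ i} → Bool), (face i false γ f, face i true γ f) ∈ θ i}

def dirClosure [DecidableEq S] (i : S) (R : Set (Cube S A)) : Set (Cube S A) :=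
  {γ | Relation.TransGen (fun a b : Cube {x : S // x ≠ i} A => (a, b) ∈ facesRel i R)
      (face i false γ) (face i true γ)}

def Centrality [DecidableEq S] [Fintype S] (δ : Set (A × A)) (i : S)
    (R : Set (Cube S A)) : Prop :=
  ¬ ∃ γ ∈ R, Nat.card {f : {x : S // x ≠ i} → Bool //
      (face i false γ f, face i true γ f) ∈ δ} = 2 ^ (Fintype.card S - 1) - 1

end Defs

def finMod (n : ℕ) [NeZero n] (j : ℕ) : Fin n :=
  ⟨j % n, Nat.mod_lt _ (Nat.pos_of_ne_zero (NeZero.ne n))⟩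

def tcSeq {A : Type u} {n : ℕ} [NeZero n] (Y : Set (Cube (Fin n) A)) :
    ℕ → Set (Cube (Fin n) A)
  | 0 => dirClosure (finMod n 0) Y
  | j + 1 => dirClosure (finMod n (j + 1)) (tcSeq Y j)

def tcClosure {A : Type u} {n : ℕ} [NeZero n] (Y : Set (Cube (Fin n) A)) :
    Set (Cube (Fin n) A) := ⋃ j : ℕ, tcSeq Y j

def lastIdx (n : ℕ) [NeZero n] : Fin n :=
  ⟨n - 1, Nat.sub_lt (Nat.pos_of_ne_zero (NeZero.ne n)) Nat.one_pos⟩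

def tcComm (σ : Signature) {A : Type u} [Alg σ A] (n : ℕ) [NeZero n]
    (θ : Fin n → Set (A × A)) : Set (A × A) :=
  ⋂₀ {δ : Set (A × A) | IsCongruence σ δ ∧ Centrality δ (lastIdx n) (MRel σ θ)}

def hComm (σ : Signature) {A : Type u} [Alg σ A] (n : ℕ) [NeZero n]
    (θ : Fin n → Set (A × A)) : Set (A × A) :=
  ⋂₀ {δ : Set (A × A) | IsCongruence σ δ ∧ Centrality δ (lastIdx n) (DeltaRel σ θ)}

inductive Term (σ : Signature) (k : ℕ) : Type
  | var : Fin k → Term σ k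
  | app : (o : σ.ops) → (Fin (σ.arity o) → Term σ k) → Term σ k

def Term.eval {σ : Signature} {k : ℕ} {A : Type u} [Alg σ A] :
    Term σ k → (Fin k → A) → A
  | .var i, v => v i
  | .app o ts, v => Alg.interp (A := A) o fun j => (ts j).eval v

def IsTaylorAlg (σ : Signature) (A : Type u) [Alg σ A] : Prop :=
  ∃ (m : ℕ) (t : Term σ (m + 1)),
    (∀ a : A, t.eval (fun _ => a) = a) ∧
    ∀ e : Fin (m + 1), ∃ u v : Fin (m + 1) → Bool, u e = false ∧ v e = true ∧
      ∀ x y : A, t.eval (fun i => bif u i then y else x)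
               = t.eval (fun i => bif v i then y else x)

open Classical in
noncomputable def comCube {A : Type u} (n : ℕ) (x y : A) : Cube (Fin n) A :=
  fun f => if ∀ i, f i = true then y else x

def iSupported {A : Type u} {S : Type v} [DecidableEq S] (i : S) (γ : Cube S A)
    (x y : A) : Prop :=
  face i false γ (fun _ => true) = x ∧ face i true γ (fun _ => true) = y ∧
  ∀ f : {z : S // z ≠ i} → Bool, f ≠ (fun _ => true) →
    face i false γ f = face i true γ f

def sqCube {A : Type u} (a b c d : A) : Cube (Fin 2) A :=
  fun f => if f 0 then (if f 1 then d else c) else (if f 1 then b else a)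

def lcs (σ : Signature) {A : Type u} [Alg σ A] (θ : Set (A × A)) : ℕ → Set (A × A)
  | 0 => θ
  | n + 1 => tcComm σ 2 ![θ, lcs σ θ n]

def diagRel (A : Type u) : Set (A × A) := {p : A × A | p.1 = p.2}

/-! ### Auxiliary development -/

namespace Stmt17

open Function

universe w

variable {X Y : Type w}

/-- The all-true position. -/
def topF (m : ℕ) : Fin m → Bool := fun _ => true

/-- Update-based closure properties (reflexive, symmetric, transitive in
every direction). -/
def UC {m : ℕ} {X : Type w} (R : Set (Cube (Fin m) X)) : Prop :=
  (∀ (i : Fin m) (b : Bool) (γ : Cube (Fin m) X), γ ∈ R →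
      (fun f => γ (update f i b)) ∈ R) ∧
  (∀ (i : Fin m) (γ : Cube (Fin m) X), γ ∈ R →
      (fun f => γ (update f i (!(f i)))) ∈ R) ∧
  (∀ (i : Fin m) (γ δ : Cube (Fin m) X), γ ∈ R → δ ∈ R →
      (∀ f, γ (update f i true) = δ (update f i false)) →
      (fun f => if f i = true then δ f else γ f) ∈ R)

theorem comCube_pos {m : ℕ} (x y : X) {f : Fin m → Bool} (h : ∀ i, f i = true) :
    comCube m x y f = y := if_pos h

theorem comCube_neg {m : ℕ} (x y : X) {f : Fin m → Bool} (h : ¬ ∀ i, f i = true) :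
    comCube m x y f = x := if_neg h

theorem forall_snoc_iff {k : ℕ} {g : Fin (k+1) → Bool} :
    (∀ i, g i = true) ↔ (∀ x : Fin k, g (Fin.castSucc x) = true) ∧ g (Fin.last k) = true := by
  constructor
  · exact fun h => ⟨fun x => h _, h _⟩
  · rintro ⟨h1, h2⟩ i
    induction i using Fin.lastCases with
    | last => exact h2
    | cast x => exact h1 x

/-- Pack an `(m+1)`-cube as an `m`-cube of pairs (splitting the last direction). -/
def pk {m : ℕ} (γ : Cube (Fin (m+1)) X) : Cube (Fin m) (X × X) :=
  fun f => (γ (Fin.snoc f false), γ (Fin.snoc f true))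

/-- Inverse of `pk`. -/
def upk {m : ℕ} (Γ : Cube (Fin m) (X × X)) : Cube (Fin (m+1)) X :=
  fun g => if g (Fin.last m) then (Γ (Fin.init g)).2 else (Γ (Fin.init g)).1

theorem upk_pk {m : ℕ} (γ : Cube (Fin (m+1)) X) : upk (pk γ) = γ := by
  funext g
  unfold upk pk
  cases h : g (Fin.last m) <;> simp [h] <;>
    · conv_rhs => rw [← Fin.snoc_init_self g]
      rw [h]

theorem pk_upk {m : ℕ} (Γ : Cube (Fin m) (X × X)) : pk (upk Γ) = Γ := by
  funext f
  unfold upk pk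
  simp [Fin.init_snoc]

/-- Transport of a cube set along `pk`. -/
def pkSet {m : ℕ} (R : Set (Cube (Fin (m+1)) X)) : Set (Cube (Fin m) (X × X)) :=
  {Γ | upk Γ ∈ R}

theorem pk_mem {m : ℕ} {R : Set (Cube (Fin (m+1)) X)} {γ : Cube (Fin (m+1)) X}
    (h : γ ∈ R) : pk γ ∈ pkSet R := by
  simp only [pkSet, Set.mem_setOf_eq, upk_pk]; exact h

theorem pkSet_mem {m : ℕ} {R : Set (Cube (Fin (m+1)) X)} {Γ : Cube (Fin m) (X × X)}
    (h : Γ ∈ pkSet R) : upk Γ ∈ R := h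

-- index bookkeeping
theorem update_snoc_last {m : ℕ} (f : Fin m → Bool) (b c : Bool) :
    update (Fin.snoc f b : Fin (m+1) → Bool) (Fin.last m) c = Fin.snoc f c := by
  funext j
  induction j using Fin.lastCases with
  | last => simp
  | cast x => rw [update_of_ne (Fin.castSucc_lt_last x).ne]; simp

theorem update_snoc_castSucc {m : ℕ} (f : Fin m → Bool) (b c : Bool) (i : Fin m) :
    update (Fin.snoc f b : Fin (m+1) → Bool) (Fin.castSucc i) c
      = Fin.snoc (update f i c) b := by
  funext j
  induction j using Fin.lastCases with
  | last => rw [update_of_ne (Fin.castSucc_lt_last i).ne']; simp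
  | cast x =>
    by_cases h : x = i
    · subst h; simp
    · rw [update_of_ne (by simpa using h), Fin.snoc_castSucc, Fin.snoc_castSucc,
        update_of_ne h]

theorem init_update_castSucc {m : ℕ} (g : Fin (m+1) → Bool) (i : Fin m) (c : Bool) :
    Fin.init (update g (Fin.castSucc i) c) = update (Fin.init g) i c := by
  funext x
  by_cases h : x = i
  · subst h; simp [Fin.init]
  · simp [Fin.init, update_of_ne h, update_of_ne (fun hc => h (Fin.castSucc_injective _ hc))]

theorem init_update_last {m : ℕ} (g : Fin (m+1) → Bool) (c : Bool) :
    Fin.init (update g (Fin.last m) c) = Fin.init g := by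
  funext x
  simp [Fin.init, update_of_ne (Fin.castSucc_lt_last x).ne]

theorem last_update_castSucc {m : ℕ} (g : Fin (m+1) → Bool) (i : Fin m) (c : Bool) :
    update g (Fin.castSucc i) c (Fin.last m) = g (Fin.last m) := by
  rw [update_of_ne (Fin.castSucc_lt_last i).ne']

end Stmt17
namespace Stmt17

open Function

universe w
variable {X : Type w} {m : ℕ}

theorem upk_update {Γ : Cube (Fin m) (X × X)} (i : Fin m) (b : Bool) :
    (fun g => upk Γ (update g (Fin.castSucc i) b))
      = upk (fun f => Γ (update f i b)) := by
  funext g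
  unfold upk
  rw [last_update_castSucc, init_update_castSucc]

theorem upk_flip {Γ : Cube (Fin m) (X × X)} (i : Fin m) :
    (fun g => upk Γ (update g (Fin.castSucc i) (!(g (Fin.castSucc i)))))
      = upk (fun f => Γ (update f i (!(f i)))) := by
  funext g
  unfold upk
  rw [last_update_castSucc, init_update_castSucc]
  rfl

theorem upk_mix {Γ Δ : Cube (Fin m) (X × X)} (i : Fin m) :
    (fun g => if g (Fin.castSucc i) = true then upk Δ g else upk Γ g)
      = upk (fun f => if f i = true then Δ f else Γ f) := by
  funext g
  unfold upk
  by_cases h : g (Fin.castSucc i) = true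
  · have h' : Fin.init g i = true := h
    simp [h, h']
  · have h' : ¬ Fin.init g i = true := h
    simp [h, h']

theorem UC.pkSet {R : Set (Cube (Fin (m+1)) X)} (hR : UC R) : UC (Stmt17.pkSet R) := by
  obtain ⟨h1, h2, h3⟩ := hR
  refine ⟨?_, ?_, ?_⟩
  · intro i b Γ hΓ
    show upk _ ∈ R
    rw [← upk_update]
    exact h1 (Fin.castSucc i) b (upk Γ) hΓ
  · intro i Γ hΓ
    show upk _ ∈ R
    rw [← upk_flip]
    exact h2 (Fin.castSucc i) (upk Γ) hΓ
  · intro i Γ Δ hΓ hΔ hmatch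
    show upk _ ∈ R
    rw [← upk_mix]
    refine h3 (Fin.castSucc i) (upk Γ) (upk Δ) hΓ hΔ ?_
    intro g
    show (fun g => upk Γ (update g (Fin.castSucc i) true)) g
        = (fun g => upk Δ (update g (Fin.castSucc i) false)) g
    rw [upk_update, upk_update]
    unfold upk
    simp only [hmatch]

theorem upk_com {m : ℕ} (D W : X) :
    upk (comCube m (D, D) (D, W)) = comCube (m+1) D W := by
  funext g
  unfold upk
  by_cases hl : g (Fin.last m) = true
  · by_cases hi : ∀ x, Fin.init g x = true
    · rw [comCube_pos _ _ hi, hl, comCube_pos]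
      · rfl
      · exact forall_snoc_iff.2 ⟨hi, hl⟩
    · rw [comCube_neg _ _ hi, hl, comCube_neg]
      · rfl
      · intro hc; exact hi fun x => hc _
  · have hl' : g (Fin.last m) = false := by revert hl; cases g (Fin.last m) <;> simp
    have hr : comCube (m+1) D W g = D := comCube_neg D W (fun hc => hl (hc _))
    rw [hr, hl']
    by_cases hi : ∀ x, Fin.init g x = true
    · rw [comCube_pos _ _ hi]; simp
    · rw [comCube_neg _ _ hi]; simp

theorem pk_com {m : ℕ} (D W : X) :
    pk (comCube (m+1) D W) = comCube m (D, D) (D, W) := by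
  rw [← upk_com D W, pk_upk]

theorem com_mem_pkSet {m : ℕ} {R : Set (Cube (Fin (m+1)) X)} {D W : X} :
    comCube m (D, D) (D, W) ∈ pkSet R ↔ comCube (m+1) D W ∈ R := by
  show upk _ ∈ R ↔ _
  rw [upk_com]

end Stmt17
namespace Stmt17

open Function

universe w
variable {X : Type w} {m : ℕ}

/-- Set all coordinates in `J` to `true`. -/
def setAllT (J : Finset (Fin m)) (f : Fin m → Bool) : Fin m → Bool :=
  fun i => if i ∈ J then true else f i

/-- Negate all coordinates in `J`. -/
def flipAll (J : Finset (Fin m)) (f : Fin m → Bool) : Fin m → Bool :=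
  fun i => if i ∈ J then !(f i) else f i

theorem setAllT_insert (J : Finset (Fin m)) (j : Fin m) (f : Fin m → Bool) :
    setAllT (insert j J) f = update (setAllT J f) j true := by
  funext i
  by_cases h : i = j
  · subst h; simp [setAllT]
  · simp [setAllT, update_of_ne h, h]

theorem UC.setAllT {R : Set (Cube (Fin m) X)} (hR : UC R) (J : Finset (Fin m))
    {γ : Cube (Fin m) X} (hγ : γ ∈ R) : (fun f => γ (Stmt17.setAllT J f)) ∈ R := by
  induction J using Finset.induction_on generalizing γ with
  | empty =>
    have e : (fun f => γ (Stmt17.setAllT ∅ f)) = γ := funext fun f => by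
      congr 1
    rw [e]; exact hγ
  | @insert j J hj ih =>
    have h1 := hR.1 j true γ hγ
    have := ih h1
    have heq : (fun f => (fun f' => γ (update f' j true)) (Stmt17.setAllT J f))
        = fun f => γ (Stmt17.setAllT (insert j J) f) := by
      funext f; rw [setAllT_insert]
    rw [heq] at this
    exact this

theorem flipAll_insert (J : Finset (Fin m)) (j : Fin m) (hj : j ∉ J) (f : Fin m → Bool) :
    flipAll (insert j J) f = update (flipAll J f) j (!(f j)) := by
  funext i
  by_cases h : i = j
  · subst h; simp [flipAll, hj]
  · simp [flipAll, update_of_ne h, h]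

theorem UC.flipAll {R : Set (Cube (Fin m) X)} (hR : UC R) (J : Finset (Fin m))
    {γ : Cube (Fin m) X} (hγ : γ ∈ R) : (fun f => γ (Stmt17.flipAll J f)) ∈ R := by
  induction J using Finset.induction_on generalizing γ with
  | empty =>
    have e : (fun f => γ (Stmt17.flipAll ∅ f)) = γ := funext fun f => by
      congr 1
    rw [e]; exact hγ
  | @insert j J hj ih =>
    have h1 := hR.2.1 j γ hγ
    have := ih h1
    have heq : (fun f => (fun f' => γ (update f' j (!(f' j)))) (Stmt17.flipAll J f))
        = fun f => γ (Stmt17.flipAll (insert j J) f) := by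
      funext f
      rw [flipAll_insert J j hj]
      show γ (update (Stmt17.flipAll J f) j (!(Stmt17.flipAll J f j))) = _
      have : Stmt17.flipAll J f j = f j := by simp [Stmt17.flipAll, hj]
      rw [this]
    rw [heq] at this
    exact this

theorem flipAll_flipAll (J : Finset (Fin m)) (f : Fin m → Bool) :
    flipAll J (flipAll J f) = f := by
  funext i
  by_cases h : i ∈ J <;> simp [flipAll, h]

/-- The cube constantly `D` on `f j = false` and constantly `W` on `f j = true`. -/
def cubeAtF (j : Fin m) (D W : X) : Cube (Fin m) X :=
  fun f => if f j = true then W else D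

theorem com_setAllT_erase (j : Fin m) (D W : X) :
    (fun f => comCube m D W (setAllT (Finset.univ.erase j) f)) = cubeAtF j D W := by
  funext f
  by_cases h : f j = true
  · rw [comCube_pos]
    · simp [cubeAtF, h]
    · intro i
      by_cases hij : i = j
      · subst hij; simp [setAllT, h]
      · simp [setAllT, hij]
  · rw [comCube_neg]
    · simp [cubeAtF, h]
    · intro hc
      have := hc j
      simp [setAllT, h] at this

theorem UC.cubeAtF_mem {R : Set (Cube (Fin m) X)} (hR : UC R) {D W : X}
    (h : comCube m D W ∈ R) (j : Fin m) : cubeAtF j D W ∈ R := by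
  rw [← com_setAllT_erase j D W]
  exact hR.setAllT _ h

theorem cubeAtF_flip (j : Fin m) (D W : X) :
    (fun f => cubeAtF j D W (update f j (!(f j)))) = cubeAtF j W D := by
  funext f
  cases h : f j <;> simp [cubeAtF, h]

theorem UC.cubeAtF_mem' {R : Set (Cube (Fin m) X)} (hR : UC R) {D W : X}
    (h : comCube m D W ∈ R) (j : Fin m) : cubeAtF j W D ∈ R := by
  rw [← cubeAtF_flip j D W]
  exact hR.2.1 j _ (hR.cubeAtF_mem h j)

end Stmt17
namespace Stmt17

open Function

universe w
variable {X : Type w} {m : ℕ}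

theorem topF_apply (i : Fin m) : topF m i = true := rfl

theorem eq_topF {f : Fin m → Bool} (h : ∀ i, f i = true) : f = topF m :=
  funext fun i => h i

theorem topF_iff {f : Fin m → Bool} : f = topF m ↔ ∀ i, f i = true :=
  ⟨fun h i => by rw [h]; rfl, eq_topF⟩

theorem snoc_false_ne_top {k : ℕ} (f : Fin k → Bool) :
    (Fin.snoc f false : Fin (k+1) → Bool) ≠ topF (k+1) := by
  intro h
  have := congrFun h (Fin.last k)
  simp [topF] at this

theorem snoc_true_eq_top_iff {k : ℕ} {f : Fin k → Bool} :
    (Fin.snoc f true : Fin (k+1) → Bool) = topF (k+1) ↔ f = topF k := by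
  constructor
  · intro h
    funext x
    have := congrFun h (Fin.castSucc x)
    simpa [topF] using this
  · intro h
    subst h
    funext j
    induction j using Fin.lastCases with
    | last => simp [topF]
    | cast x => simp [topF]

theorem update_last_false_ne_top {k : ℕ} (f : Fin (k+1) → Bool) :
    update f (Fin.last k) false ≠ topF (k+1) := by
  intro h
  have := congrFun h (Fin.last k)
  simp [topF] at this

theorem comCube_zero (D E : X) (Γ : Cube (Fin 0) X) (h : Γ (topF 0) = E) :
    comCube 0 D E = Γ := by
  funext f
  have hf : f = topF 0 := funext fun i => i.elim0
  rw [hf, h, comCube_pos]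
  intro i; exact i.elim0

/-- Key Lemma "P2": if a cube in `R` is constantly `W` except for value `E` at the
top vertex, and `comCube D W ∈ R`, then `comCube D E ∈ R`. -/
theorem P2 : ∀ (m : ℕ) {X : Type w} (R : Set (Cube (Fin m) X)), UC R →
    ∀ {Γ : Cube (Fin m) X} {W E D : X}, Γ ∈ R →
    (∀ f, f ≠ topF m → Γ f = W) → Γ (topF m) = E →
    comCube m D W ∈ R → comCube m D E ∈ R := by
  intro m
  induction m with
  | zero =>
    intro X R hR Γ W E D hΓ _ htop _
    rw [comCube_zero D E Γ htop]
    exact hΓ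
  | succ k ih =>
    intro X R hR Γ W E D hΓ hW htop hcom
    set j := Fin.last k with hj
    have hK : cubeAtF j D W ∈ R := hR.cubeAtF_mem hcom j
    have hmatch : ∀ f, cubeAtF j D W (update f j true) = Γ (update f j false) := by
      intro f
      have h1 : cubeAtF j D W (update f j true) = W := by simp [cubeAtF]
      have h2 : Γ (update f j false) = W := hW _ (update_last_false_ne_top f)
      rw [h1, h2]
    have hΓ₂ : (fun f => if f j = true then Γ f else cubeAtF j D W f) ∈ R :=
      hR.2.2 j _ _ hK hΓ hmatch
    have hpk := pk_mem hΓ₂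
    have hvert : ∀ f, f ≠ topF k →
        pk (fun f => if f j = true then Γ f else cubeAtF j D W f) f = (D, W) := by
      intro f hf
      unfold pk
      have hsf : (Fin.snoc f false : Fin (k+1) → Bool) j = false := by simp [hj]
      have hst : (Fin.snoc f true : Fin (k+1) → Bool) j = true := by simp [hj]
      simp only [hsf, hst, if_true, Bool.false_eq_true, if_false]
      have h1 : cubeAtF j D W (Fin.snoc f false) = D := by simp [cubeAtF, hsf]
      have h2 : Γ (Fin.snoc f true) = W :=
        hW _ (fun hc => hf (snoc_true_eq_top_iff.1 hc))
      rw [h1, h2]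
    have hvtop : pk (fun f => if f j = true then Γ f else cubeAtF j D W f) (topF k)
        = (D, E) := by
      unfold pk
      have hsf : (Fin.snoc (topF k) false : Fin (k+1) → Bool) j = false := by simp [hj]
      have hst : (Fin.snoc (topF k) true : Fin (k+1) → Bool) j = true := by simp [hj]
      simp only [hsf, hst, if_true, Bool.false_eq_true, if_false]
      have h1 : cubeAtF j D W (Fin.snoc (topF k) false) = D := by simp [cubeAtF, hsf]
      have h2 : Γ (Fin.snoc (topF k) true) = E := by
        rw [snoc_true_eq_top_iff.2 rfl] at *
        · exact htop
      rw [h1, h2]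
    have := ih (pkSet R) hR.pkSet hpk hvert hvtop (com_mem_pkSet.2 hcom)
    exact com_mem_pkSet.1 this

end Stmt17
namespace Stmt17

open Function

universe w
variable {X : Type w} {m : ℕ}

theorem com_update_last_false {k : ℕ} (x y : X) (f : Fin (k+1) → Bool) :
    comCube (k+1) x y (update f (Fin.last k) false) = x :=
  comCube_neg x y fun hc => by
    have := hc (Fin.last k); simp at this

theorem cubeAtF_snoc_false {k : ℕ} (D W : X) (f : Fin k → Bool) :
    cubeAtF (Fin.last k) D W (Fin.snoc f false) = D := by
  simp [cubeAtF]

theorem com_snoc_true {k : ℕ} (x y : X) (f : Fin k → Bool) :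
    comCube (k+1) x y (Fin.snoc f true)
      = if f = topF k then y else x := by
  by_cases h : f = topF k
  · rw [if_pos h, comCube_pos]
    rw [h]
    exact fun i => snoc_true_eq_top_iff.2 rfl ▸ rfl
  · rw [if_neg h, comCube_neg]
    intro hc
    exact h (snoc_true_eq_top_iff.1 (eq_topF hc))

theorem com_snoc_false {k : ℕ} (x y : X) (f : Fin k → Bool) :
    comCube (k+1) x y (Fin.snoc f false) = x :=
  comCube_neg x y fun hc => by have := hc (Fin.last k); simp at this

/-- Transitivity for `comCube`-membership. -/
theorem T3 : ∀ (m : ℕ) {X : Type w} (R : Set (Cube (Fin m) X)), UC R →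
    ∀ {a b c : X}, comCube m a b ∈ R → comCube m b c ∈ R → comCube m a c ∈ R := by
  intro m
  cases m with
  | zero =>
    intro X R hR a b c _ hbc
    rw [comCube_zero a c (comCube 0 b c) (comCube_pos b c fun i => rfl)]
    exact hbc
  | succ k =>
    intro X R hR a b c hab hbc
    set j := Fin.last k with hj
    have hK : cubeAtF j a b ∈ R := hR.cubeAtF_mem hab j
    have hmatch : ∀ f, cubeAtF j a b (update f j true)
        = comCube (k+1) b c (update f j false) := by
      intro f
      rw [com_update_last_false]
      simp [cubeAtF]
    have hZ : (fun f => if f j = true then comCube (k+1) b c f else cubeAtF j a b f) ∈ R :=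
      hR.2.2 j _ _ hK hbc hmatch
    have hpk := pk_mem hZ
    refine com_mem_pkSet.1 (P2 k (pkSet R) hR.pkSet (W := (a, b)) (D := (a, a)) hpk ?_ ?_
      (com_mem_pkSet.2 hab))
    · intro f hf
      unfold pk
      have hsf : (Fin.snoc f false : Fin (k+1) → Bool) j = false := by simp [hj]
      have hst : (Fin.snoc f true : Fin (k+1) → Bool) j = true := by simp [hj]
      simp only [hsf, hst, if_true, Bool.false_eq_true, if_false]
      rw [cubeAtF_snoc_false, com_snoc_true, if_neg hf]
    · unfold pk
      have hsf : (Fin.snoc (topF k) false : Fin (k+1) → Bool) j = false := by simp [hj]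
      have hst : (Fin.snoc (topF k) true : Fin (k+1) → Bool) j = true := by simp [hj]
      simp only [hsf, hst, if_true, Bool.false_eq_true, if_false]
      rw [cubeAtF_snoc_false, com_snoc_true, if_pos rfl]

/-- Symmetry for `comCube`-membership (in dimension `≥ 1`). -/
theorem T2 : ∀ (k : ℕ) {X : Type w} (R : Set (Cube (Fin (k+1)) X)), UC R →
    ∀ {u v : X}, comCube (k+1) u v ∈ R → comCube (k+1) v u ∈ R := by
  intro k
  induction k with
  | zero =>
    intro X R hR u v hcom
    have := hR.2.1 0 _ hcom
    have heq : (fun f => comCube 1 u v (update f 0 (!(f 0)))) = comCube 1 v u := by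
      funext f
      cases h : f 0 with
      | false =>
        rw [comCube_neg v u (fun hc => by rw [hc 0] at h; exact Bool.noConfusion h)]
        rw [comCube_pos]
        intro i
        have : i = 0 := Subsingleton.elim i 0
        rw [this]
        simp [h]
      | true =>
        rw [comCube_pos v u (fun i => by rw [Subsingleton.elim i 0]; exact h)]
        rw [comCube_neg]
        intro hc
        have := hc 0
        simp [h] at this
    rw [heq] at this
    exact this
  | succ k ih =>
    intro X R hR u v hcom
    set j := Fin.last (k+1) with hj
    have hK : cubeAtF j v u ∈ R := hR.cubeAtF_mem' hcom j
    have hmatch : ∀ f, cubeAtF j v u (update f j true)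
        = comCube (k+2) u v (update f j false) := by
      intro f
      rw [com_update_last_false]
      simp [cubeAtF]
    have hZ : (fun f => if f j = true then comCube (k+2) u v f else cubeAtF j v u f) ∈ R :=
      hR.2.2 j _ _ hK hcom hmatch
    have hpkZ : pk (fun f => if f j = true then comCube (k+2) u v f else cubeAtF j v u f)
        = comCube (k+1) (v, u) (v, v) := by
      funext f
      unfold pk
      have hsf : (Fin.snoc f false : Fin (k+2) → Bool) j = false := by simp [hj]
      have hst : (Fin.snoc f true : Fin (k+2) → Bool) j = true := by simp [hj]
      simp only [hsf, hst, if_true, Bool.false_eq_true, if_false]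
      rw [cubeAtF_snoc_false, com_snoc_true]
      by_cases hf : f = topF (k+1)
      · rw [if_pos hf, comCube_pos _ _ (by rw [hf]; exact fun i => rfl)]
      · rw [if_neg hf, comCube_neg _ _ (fun hc => hf (eq_topF hc))]
    have hmem : comCube (k+1) (v, u) (v, v) ∈ pkSet R := by
      rw [← hpkZ]; exact pk_mem hZ
    have := ih (pkSet R) hR.pkSet hmem
    exact com_mem_pkSet.1 this

end Stmt17
namespace Stmt17

open Function

universe w
variable {X : Type w} {m : ℕ}

theorem init_topF {k : ℕ} : Fin.init (topF (k+1)) = topF k := rfl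

theorem snoc_top_true_eq_top {k : ℕ} :
    (Fin.snoc (topF k) true : Fin (k+1) → Bool) = topF (k+1) :=
  snoc_true_eq_top_iff.2 rfl

theorem snoc_top_false_eq_update {k : ℕ} :
    (Fin.snoc (topF k) false : Fin (k+1) → Bool)
      = update (topF (k+1)) (Fin.last k) false := by
  funext i
  induction i using Fin.lastCases with
  | last => simp
  | cast x => rw [Fin.snoc_castSucc, update_of_ne (Fin.castSucc_lt_last x).ne]; rfl

theorem eq_top_iff_parts {k : ℕ} {g : Fin (k+1) → Bool} :
    g = topF (k+1) ↔ Fin.init g = topF k ∧ g (Fin.last k) = true := by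
  rw [topF_iff, forall_snoc_iff, topF_iff]
  exact Iff.rfl

/-- Replacement of the top vertex: if `Λ ∈ R` has top vertex `W` and
`comCube D W ∈ R`, then `Λ` with top vertex replaced by `D` is in `R`. -/
theorem RPtop : ∀ (k : ℕ) {X : Type w} (R : Set (Cube (Fin (k+1)) X)), UC R →
    ∀ {Λ : Cube (Fin (k+1)) X} {D : X}, Λ ∈ R →
    comCube (k+1) D (Λ (topF (k+1))) ∈ R →
    (fun f => if f = topF (k+1) then D else Λ f) ∈ R := by
  intro k
  induction k with
  | zero =>
    intro X R hR Λ D hΛ hcom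
    have hC : (fun f => comCube 1 D (Λ (topF 1)) (update f 0 (!(f 0)))) ∈ R :=
      hR.2.1 0 _ hcom
    have hmatch : ∀ f : Fin 1 → Bool, Λ (update f 0 true)
        = comCube 1 D (Λ (topF 1)) (update (update f 0 false) 0 (!(update f 0 false 0))) := by
      intro f
      have h1 : update f 0 true = topF 1 := by
        funext i
        rw [Subsingleton.elim i 0]; simp [topF]
      have h2 : update (update f 0 false) 0 (!(update f 0 false 0)) = topF 1 := by
        funext i
        rw [Subsingleton.elim i 0]; simp [topF]
      rw [h1, h2]
      exact (comCube_pos _ _ fun i => rfl).symm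
    have hmix := hR.2.2 0 Λ _ hΛ hC hmatch
    have heq : (fun f => if f 0 = true
        then (fun f => comCube 1 D (Λ (topF 1)) (update f 0 (!(f 0)))) f else Λ f)
        = fun f => if f = topF 1 then D else Λ f := by
      funext f
      cases h : f 0 with
      | true =>
        have hf : f = topF 1 := by
          funext i; rw [Subsingleton.elim i 0]; exact h
        simp only [h, if_true, if_pos hf]
        exact comCube_neg _ _ (fun hc => by have h2 := hc 0; simp at h2)
      | false =>
        have hf : ¬ f = topF 1 := fun hc => by rw [hc] at h; exact Bool.noConfusion h
        simp only [h, Bool.false_eq_true, if_false, if_neg hf]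
    rw [heq] at hmix
    exact hmix
  | succ k ih =>
    intro X R hR Λ D hΛ hcom
    set j := Fin.last (k+1) with hj
    set W := Λ (topF (k+2)) with hW
    set a₀ := Λ (update (topF (k+2)) j false) with ha₀
    -- c1 : cubeAtF j a₀ W ∈ R
    have hc1 : cubeAtF j a₀ W ∈ R := by
      have := hR.setAllT (Finset.univ.erase j) hΛ
      have heq : (fun f => Λ (setAllT (Finset.univ.erase j) f)) = cubeAtF j a₀ W := by
        funext f
        cases h : f j with
        | true =>
          have : setAllT (Finset.univ.erase j) f = topF (k+2) := by
            funext i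
            by_cases hij : i = j
            · subst hij; simp [setAllT, h, topF]
            · simp [setAllT, hij, topF]
          rw [this, ← hW]
          simp [cubeAtF, h]
        | false =>
          have : setAllT (Finset.univ.erase j) f = update (topF (k+2)) j false := by
            funext i
            by_cases hij : i = j
            · subst hij; simp [setAllT, h]
            · simp [setAllT, hij, update_of_ne hij, topF]
          rw [this, ← ha₀]
          simp [cubeAtF, h]
      rw [heq] at this
      exact this
    -- c2 : cubeAtF j W D ∈ R
    have hc2 : cubeAtF j W D ∈ R := hR.cubeAtF_mem' hcom j
    -- c3 : cubeAtF j a₀ D ∈ R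
    have hc3 : cubeAtF j a₀ D ∈ R := by
      have hmatch : ∀ f, cubeAtF j a₀ W (update f j true)
          = cubeAtF j W D (update f j false) := by
        intro f; simp [cubeAtF]
      have := hR.2.2 j _ _ hc1 hc2 hmatch
      have heq : (fun f => if f j = true then cubeAtF j W D f else cubeAtF j a₀ W f)
          = cubeAtF j a₀ D := by
        funext f
        cases h : f j <;> simp [cubeAtF, h]
      rw [heq] at this
      exact this
    -- c4 : V ∈ R
    have hmatch4 : ∀ f, cubeAtF j a₀ D (update f j true)
        = comCube (k+2) D W (update f j false) := by
      intro f
      rw [com_update_last_false]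
      simp [cubeAtF]
    have hV : (fun f => if f j = true then comCube (k+2) D W f else cubeAtF j a₀ D f) ∈ R :=
      hR.2.2 j _ _ hc3 hcom hmatch4
    have hpkV : pk (fun f => if f j = true then comCube (k+2) D W f else cubeAtF j a₀ D f)
        = comCube (k+1) (a₀, D) (a₀, W) := by
      funext f
      unfold pk
      have hsf : (Fin.snoc f false : Fin (k+2) → Bool) j = false := by simp [hj]
      have hst : (Fin.snoc f true : Fin (k+2) → Bool) j = true := by simp [hj]
      simp only [hsf, hst, if_true, Bool.false_eq_true, if_false]
      rw [cubeAtF_snoc_false, com_snoc_true]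
      by_cases hf : f = topF (k+1)
      · rw [if_pos hf, comCube_pos _ _ (by rw [hf]; exact fun i => rfl)]
      · rw [if_neg hf, comCube_neg _ _ (fun hc => hf (eq_topF hc))]
    have hΛtop : pk Λ (topF (k+1)) = (a₀, W) := by
      unfold pk
      rw [snoc_top_false_eq_update, snoc_top_true_eq_top]
    have hmem : comCube (k+1) (a₀, D) (pk Λ (topF (k+1))) ∈ pkSet R := by
      rw [hΛtop, ← hpkV]
      exact pk_mem hV
    have hih := ih (pkSet R) hR.pkSet (pk_mem hΛ) hmem
    have hupk : upk (fun f => if f = topF (k+1) then (a₀, D) else pk Λ f)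
        = fun g => if g = topF (k+2) then D else Λ g := by
      funext g
      show (if g (Fin.last (k+1)) = true
          then (if Fin.init g = topF (k+1) then (a₀, D) else pk Λ (Fin.init g)).2
          else (if Fin.init g = topF (k+1) then (a₀, D) else pk Λ (Fin.init g)).1)
          = if g = topF (k+2) then D else Λ g
      by_cases hl : g (Fin.last (k+1)) = true
      · by_cases hi : Fin.init g = topF (k+1)
        · have hg : g = topF (k+2) := eq_top_iff_parts.2 ⟨hi, hl⟩
          rw [if_pos hl, if_pos hi, if_pos hg]
        · have hg : ¬ g = topF (k+2) := fun hc => hi (by rw [hc]; rfl)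
          rw [if_pos hl, if_neg hi, if_neg hg]
          show Λ (Fin.snoc (Fin.init g) true) = Λ g
          conv_rhs => rw [← Fin.snoc_init_self g]
          rw [hl]
      · have hl' : g (Fin.last (k+1)) = false := by
          revert hl; cases g (Fin.last (k+1)) <;> simp
        have hg : ¬ g = topF (k+2) := fun hc => hl (by rw [hc]; rfl)
        rw [if_neg hl, if_neg hg]
        by_cases hi : Fin.init g = topF (k+1)
        · rw [if_pos hi]
          show a₀ = Λ g
          rw [ha₀, hj]
          congr 1
          rw [← snoc_top_false_eq_update, ← hi]
          conv_rhs => rw [← Fin.snoc_init_self g]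
          rw [hl']
        · rw [if_neg hi]
          show Λ (Fin.snoc (Fin.init g) false) = Λ g
          conv_rhs => rw [← Fin.snoc_init_self g]
          rw [hl']
    have := pkSet_mem hih
    rw [hupk] at this
    exact this

end Stmt17
namespace Stmt17

open Function

universe w
variable {X : Type w} {m : ℕ}

section RP

variable {k : ℕ}

/-- The set of coordinates where `g₀` is false. -/
def offSet (g₀ : Fin m → Bool) : Finset (Fin m) :=
  Finset.univ.filter (fun i => g₀ i = false)

theorem flipAll_offSet_self (g₀ : Fin m → Bool) :
    flipAll (offSet g₀) g₀ = topF m := by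
  funext i
  by_cases h : g₀ i = false
  · simp [flipAll, offSet, h, topF]
  · have h' : g₀ i = true := by revert h; cases g₀ i <;> simp
    simp [flipAll, offSet, h', topF]

theorem flipAll_offSet_top (g₀ : Fin m → Bool) :
    flipAll (offSet g₀) (topF m) = g₀ := by
  conv_rhs => rw [← flipAll_flipAll (offSet g₀) g₀, flipAll_offSet_self]

theorem flipAll_eq_top_iff {g₀ f : Fin m → Bool} :
    flipAll (offSet g₀) f = topF m ↔ f = g₀ := by
  constructor
  · intro h
    have := congrArg (flipAll (offSet g₀)) h
    rwa [flipAll_flipAll, flipAll_offSet_top] at this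
  · intro h
    rw [h]
    exact flipAll_offSet_self g₀

/-- Replacement of an arbitrary vertex. -/
theorem RP (R : Set (Cube (Fin (k+1)) X)) (hR : UC R)
    {Λ : Cube (Fin (k+1)) X} (hΛ : Λ ∈ R) (g₀ : Fin (k+1) → Bool) {D : X}
    (hcom : comCube (k+1) D (Λ g₀) ∈ R) :
    (fun f => if f = g₀ then D else Λ f) ∈ R := by
  have hΛ' : (fun f => Λ (flipAll (offSet g₀) f)) ∈ R := hR.flipAll (offSet g₀) hΛ
  have hcom' : comCube (k+1) D (Λ (flipAll (offSet g₀) (topF (k+1)))) ∈ R := by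
    rw [flipAll_offSet_top]
    exact hcom
  have h1 := RPtop k R hR hΛ' hcom'
  have h2 := hR.flipAll (offSet g₀) h1
  have heq : (fun f => (fun f' => if f' = topF (k+1) then D
        else Λ (flipAll (offSet g₀) f')) (flipAll (offSet g₀) f))
      = fun f => if f = g₀ then D else Λ f := by
    funext f
    show (if flipAll (offSet g₀) f = topF (k+1) then D
        else Λ (flipAll (offSet g₀) (flipAll (offSet g₀) f)))
        = if f = g₀ then D else Λ f
    rw [flipAll_flipAll]
    by_cases h : f = g₀
    · rw [if_pos h, if_pos (flipAll_eq_top_iff.2 h)]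
    · rw [if_neg h, if_neg (fun hc => h (flipAll_eq_top_iff.1 hc))]
  rw [heq] at h2
  exact h2

end RP

/-- Key Lemma "P": a cube in `R` with all vertices diagonal except the top one
yields membership of the corresponding commutator cube. -/
theorem LemP : ∀ (m : ℕ) {X : Type w} (R : Set (Cube (Fin m) (X × X))), UC R →
    (∀ γ ∈ R, (fun f => ((γ f).1, (γ f).1)) ∈ R) →
    ∀ {Γ : Cube (Fin m) (X × X)}, Γ ∈ R →
    (∀ f, f ≠ topF m → (Γ f).2 = (Γ f).1) →
    comCube m ((Γ (topF m)).1, (Γ (topF m)).1) (Γ (topF m)) ∈ R := by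
  intro m
  induction m with
  | zero =>
    intro X R _ _ Γ hΓ _
    rw [comCube_zero _ _ Γ rfl]
    exact hΓ
  | succ k ih =>
    intro X R hR hd Γ hΓ hdiag
    set j := Fin.last k with hj
    have hγ₁ : (fun f => ((Γ f).1, (Γ f).1)) ∈ R := hd Γ hΓ
    have hγ₂ : (fun f => ((Γ (update f j (!(f j)))).1, (Γ (update f j (!(f j)))).1)) ∈ R := by
      have := hR.2.1 j _ hγ₁
      exact this
    have hmatch : ∀ f, ((Γ (update (update f j true) j
        (!(update f j true j)))).1, (Γ (update (update f j true) j (!(update f j true j)))).1)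
        = Γ (update f j false) := by
      intro f
      have h1 : update (update f j true) j (!(update f j true j)) = update f j false := by
        rw [update_self, Bool.not_true, update_idem]
      rw [h1]
      have h2 := hdiag _ (update_last_false_ne_top f)
      exact Prod.ext rfl h2.symm
    have hγ₄ : (fun f => if f j = true then Γ f
        else ((Γ (update f j (!(f j)))).1, (Γ (update f j (!(f j)))).1)) ∈ R :=
      hR.2.2 j _ _ hγ₂ hΓ hmatch
    -- packed cube
    have hd' : ∀ Γ' ∈ pkSet R, (fun f => ((Γ' f).1, (Γ' f).1)) ∈ pkSet R := by
      intro Γ' hΓ'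
      show upk _ ∈ R
      have heq : upk (fun f => ((Γ' f).1, (Γ' f).1))
          = fun g => upk Γ' (update g (Fin.last k) false) := by
        funext g
        show (if g (Fin.last k) = true then (Γ' (Fin.init g)).1 else (Γ' (Fin.init g)).1)
            = upk Γ' (update g (Fin.last k) false)
        have h1 : upk Γ' (update g (Fin.last k) false) = (Γ' (Fin.init g)).1 := by
          show (if update g (Fin.last k) false (Fin.last k) = true then _ else _) = _
          rw [update_self]
          simp only [Bool.false_eq_true, if_false, init_update_last]
        rw [h1]
        cases g (Fin.last k) <;> simp
      rw [heq]
      exact hR.1 (Fin.last k) false _ hΓ'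
    have hpkvert : ∀ f, pk (fun f => if f j = true then Γ f
        else ((Γ (update f j (!(f j)))).1, (Γ (update f j (!(f j)))).1)) f
        = (((Γ (Fin.snoc f true)).1, (Γ (Fin.snoc f true)).1), Γ (Fin.snoc f true)) := by
      intro f
      unfold pk
      have hsf : (Fin.snoc f false : Fin (k+1) → Bool) j = false := by simp [hj]
      have hst : (Fin.snoc f true : Fin (k+1) → Bool) j = true := by simp [hj]
      simp only [hsf, hst, if_true, Bool.false_eq_true, if_false]
      congr 2 <;>
      · rw [Bool.not_false, hj, update_snoc_last]
    have hpk := pk_mem hγ₄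
    have hih := ih (pkSet R) hR.pkSet hd' hpk ?_
    · rw [hpkvert (topF k)] at hih
      rw [snoc_top_true_eq_top] at hih
      exact com_mem_pkSet.1 hih
    · intro f hf
      rw [hpkvert f]
      show Γ (Fin.snoc f true) = ((Γ (Fin.snoc f true)).1, (Γ (Fin.snoc f true)).1)
      have := hdiag (Fin.snoc f true) (fun hc => hf (snoc_true_eq_top_iff.1 hc))
      exact Prod.ext rfl this
  
/-- Absorption with the exceptional vertex at the top. -/
theorem ABStop {k : ℕ} {X : Type w} (R : Set (Cube (Fin (k+1)) (X × X))) (hR : UC R)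
    (hd : ∀ γ ∈ R, (fun f => ((γ f).1, (γ f).1)) ∈ R)
    {Γ : Cube (Fin (k+1)) (X × X)} (hΓ : Γ ∈ R)
    (h : ∀ f, f ≠ topF (k+1) → comCube (k+1) ((Γ f).1, (Γ f).1) (Γ f) ∈ R) :
    comCube (k+1) ((Γ (topF (k+1))).1, (Γ (topF (k+1))).1) (Γ (topF (k+1))) ∈ R := by
  have hstep : ∀ T : Finset (Fin (k+1) → Bool), topF (k+1) ∉ T →
      (fun f => if f ∈ T then ((Γ f).1, (Γ f).1) else Γ f) ∈ R := by
    intro T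
    induction T using Finset.induction_on with
    | empty => intro _; simpa using hΓ
    | @insert g₁ T hg₁ ihT =>
      intro hT
      have htop : topF (k+1) ∉ T := fun hc => hT (Finset.mem_insert_of_mem hc)
      have hg₁top : g₁ ≠ topF (k+1) := fun hc => hT (hc ▸ Finset.mem_insert_self g₁ T)
      have hprev := ihT htop
      have hval : (if g₁ ∈ T then ((Γ g₁).1, (Γ g₁).1) else Γ g₁) = Γ g₁ := by
        simp [hg₁]
      have hrp := RP R hR hprev g₁ (D := ((Γ g₁).1, (Γ g₁).1)) (by
        rw [hval]
        exact h g₁ hg₁top)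
      have heq : (fun f => if f = g₁ then ((Γ g₁).1, (Γ g₁).1)
          else if f ∈ T then ((Γ f).1, (Γ f).1) else Γ f)
          = fun f => if f ∈ insert g₁ T then ((Γ f).1, (Γ f).1) else Γ f := by
        funext f
        by_cases hf : f = g₁
        · subst hf; simp
        · simp [hf, Finset.mem_insert, hf]
      rw [heq] at hrp
      exact hrp
  have hmem := hstep (Finset.univ.erase (topF (k+1))) (by simp)
  have hfin := LemP (k+1) R hR hd hmem ?_
  · have hv : (if topF (k+1) ∈ Finset.univ.erase (topF (k+1))
        then ((Γ (topF (k+1))).1, (Γ (topF (k+1))).1) else Γ (topF (k+1)))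
        = Γ (topF (k+1)) := by simp
    rwa [hv] at hfin
  · intro f hf
    have hfm : f ∈ Finset.univ.erase (topF (k+1)) := Finset.mem_erase.2 ⟨hf, Finset.mem_univ f⟩
    simp [hfm]

/-- Absorption at an arbitrary vertex. -/
theorem ABS {k : ℕ} {X : Type w} (R : Set (Cube (Fin (k+1)) (X × X))) (hR : UC R)
    (hd : ∀ γ ∈ R, (fun f => ((γ f).1, (γ f).1)) ∈ R)
    {Γ : Cube (Fin (k+1)) (X × X)} (hΓ : Γ ∈ R) (g₀ : Fin (k+1) → Bool)
    (h : ∀ f, f ≠ g₀ → comCube (k+1) ((Γ f).1, (Γ f).1) (Γ f) ∈ R) :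
    comCube (k+1) ((Γ g₀).1, (Γ g₀).1) (Γ g₀) ∈ R := by
  have hΓ' : (fun f => Γ (flipAll (offSet g₀) f)) ∈ R := hR.flipAll (offSet g₀) hΓ
  have habs := ABStop R hR hd hΓ' ?_
  · have htop : Γ (flipAll (offSet g₀) (topF (k+1))) = Γ g₀ := by
      rw [flipAll_offSet_top]
    rwa [htop] at habs
  · intro f hf
    refine h (flipAll (offSet g₀) f) (fun hc => hf ?_)
    have := congrArg (flipAll (offSet g₀)) hc
    rwa [flipAll_flipAll, flipAll_offSet_self] at this

end Stmt17
namespace Stmt17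

open Function

universe w
variable {A : Type w} {n : ℕ}

theorem dite_eq_update (f : Fin n → Bool) (i : Fin n) (b : Bool) :
    (fun j => if h : j = i then b else f j) = update f i b := by
  funext j
  by_cases h : j = i
  · subst h; simp
  · simp [h, update_of_ne h]

theorem face_eval (i : Fin n) (b : Bool) (γ : Cube (Fin n) A) (f : Fin n → Bool) :
    face i b γ (fun x => f x.val) = γ (update f i b) := by
  show γ _ = γ _
  congr 1
  exact dite_eq_update f i b

theorem dite_update_dite (g : {x : Fin n // x ≠ i} → Bool) (b c : Bool) :
    update (fun j => if h : j = i then b else g ⟨j, h⟩) i c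
      = fun j => if h : j = i then c else g ⟨j, h⟩ := by
  funext j
  by_cases h : j = i
  · subst h; simp
  · simp [h, update_of_ne h]

theorem face_of_update (i : Fin n) (b c : Bool) (γ : Cube (Fin n) A) :
    face i b (fun f => γ (update f i c)) = face i c γ := by
  funext g
  show γ (update _ i c) = γ _
  congr 1
  exact dite_update_dite g b c

theorem cube_eq_glue (i : Fin n) (γ : Cube (Fin n) A) (f : Fin n → Bool) :
    γ f = if f i = true then face i true γ (fun x => f x.val)
      else face i false γ (fun x => f x.val) := by
  rw [face_eval, face_eval]
  cases h : f i with
  | true => simp only [if_true]; rw [← h, update_eq_self]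
  | false => simp only [Bool.false_eq_true, if_false]; rw [← h, update_eq_self]

/-- From the official closure properties to the update-based ones. -/
theorem isHC_UC {σ : Signature} [Alg σ A] {R : Set (Cube (Fin n) A)}
    (h : IsHCongruence σ R) : UC R := by
  obtain ⟨⟨_, hrefl, hsymm⟩, htrans⟩ := h
  refine ⟨?_, ?_, ?_⟩
  · intro i b γ hγ
    have hq := hrefl i _ _ ⟨γ, hγ, rfl⟩
    have hmem : (face i b γ, face i b γ) ∈ facesRel i R := by
      cases b
      · exact hq.1
      · exact hq.2
    obtain ⟨γ', hγ', heq⟩ := hmem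
    have h1 : face i false γ' = face i b γ := congrArg Prod.fst heq.symm
    have h2 : face i true γ' = face i b γ := congrArg Prod.snd heq.symm
    have : γ' = fun f => γ (update f i b) := by
      funext f
      rw [cube_eq_glue i γ' f, h1, h2, face_eval]
      cases h : f i <;> simp
    rw [← this]
    exact hγ'
  · intro i γ hγ
    obtain ⟨γ', hγ', heq⟩ := hsymm i _ _ ⟨γ, hγ, rfl⟩
    have h1 : face i false γ' = face i true γ := congrArg Prod.fst heq.symm
    have h2 : face i true γ' = face i false γ := congrArg Prod.snd heq.symm
    have : γ' = fun f => γ (update f i (!(f i))) := by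
      funext f
      rw [cube_eq_glue i γ' f, h1, h2, face_eval, face_eval]
      cases h : f i <;> simp [h]
    rw [← this]
    exact hγ'
  · intro i γ δ hγ hδ hmatch
    have hfeq : face i true γ = face i false δ := by
      funext g
      have := hmatch (fun j => if h : j = i then false else g ⟨j, h⟩)
      rw [dite_update_dite g false true, dite_update_dite g false false] at this
      exact this
    have h2mem : (face i true γ, face i true δ) ∈ facesRel i R :=
      ⟨δ, hδ, by rw [hfeq]⟩
    obtain ⟨W, hW, heq⟩ := htrans i _ _ _ ⟨γ, hγ, rfl⟩ h2mem
    have h1 : face i false W = face i false γ := congrArg Prod.fst heq.symm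
    have h2 : face i true W = face i true δ := congrArg Prod.snd heq.symm
    have : W = fun f => if f i = true then δ f else γ f := by
      funext f
      rw [cube_eq_glue i W f, h1, h2, face_eval, face_eval]
      cases h : f i with
      | true => simp only [if_true]; rw [← h, update_eq_self]
      | false => simp only [Bool.false_eq_true, if_false]; rw [← h, update_eq_self]
    rw [← this]
    exact hW

/-- From the update-based closure properties (plus compatibility) to the
official ones. -/
theorem UC_isHC {σ : Signature} [Alg σ A] {R : Set (Cube (Fin n) A)}
    (hUC : UC R) (hcompat : CompatCube σ R) : IsHCongruence σ R := by
  refine ⟨⟨hcompat, ?_, ?_⟩, ?_⟩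
  · intro i p q hpq
    obtain ⟨γ, hγ, heq⟩ := hpq
    have hp : p = face i false γ := congrArg Prod.fst heq
    have hq : q = face i true γ := congrArg Prod.snd heq
    constructor
    · exact ⟨fun f => γ (update f i false), hUC.1 i false γ hγ, by
        rw [hp, face_of_update i false false γ, face_of_update i true false γ]⟩
    · exact ⟨fun f => γ (update f i true), hUC.1 i true γ hγ, by
        rw [hq, face_of_update i false true γ, face_of_update i true true γ]⟩
  · intro i p q hpq
    obtain ⟨γ, hγ, heq⟩ := hpq
    have hp : p = face i false γ := congrArg Prod.fst heq
    have hq : q = face i true γ := congrArg Prod.snd heq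
    refine ⟨fun f => γ (update f i (!(f i))), hUC.2.1 i γ hγ, ?_⟩
    have hf : face i false (fun f => γ (update f i (!(f i)))) = face i true γ := by
      funext g
      show γ (update _ i _) = γ _
      rw [show (fun j => if h : j = i then false else g ⟨j, h⟩) i = false by simp,
        Bool.not_false, dite_update_dite g false true]
    have ht : face i true (fun f => γ (update f i (!(f i)))) = face i false γ := by
      funext g
      show γ (update _ i _) = γ _
      rw [show (fun j => if h : j = i then true else g ⟨j, h⟩) i = true by simp,
        Bool.not_true, dite_update_dite g true false]
    rw [hp, hq, hf, ht]
  · intro i p q r hpq hqr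
    obtain ⟨γ, hγ, heqγ⟩ := hpq
    obtain ⟨δ, hδ, heqδ⟩ := hqr
    have hp : p = face i false γ := congrArg Prod.fst heqγ
    have hq : q = face i true γ := congrArg Prod.snd heqγ
    have hq' : q = face i false δ := congrArg Prod.fst heqδ
    have hr : r = face i true δ := congrArg Prod.snd heqδ
    rw [hq] at hq'
    have hmatch : ∀ f, γ (update f i true) = δ (update f i false) := by
      intro f
      have h1 := congrFun hq' (fun x => f x.val)
      rw [face_eval, face_eval] at h1
      exact h1
    refine ⟨fun f => if f i = true then δ f else γ f, hUC.2.2 i γ δ hγ hδ hmatch, ?_⟩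
    have hf : face i false (fun f => if f i = true then δ f else γ f) = face i false γ := by
      funext g
      show (if _ = true then _ else _) = _
      rw [show (fun j => if h : j = i then false else g ⟨j, h⟩) i = false by simp]
      simp only [Bool.false_eq_true, if_false]
      rfl
    have ht : face i true (fun f => if f i = true then δ f else γ f) = face i true δ := by
      funext g
      show (if _ = true then _ else _) = _
      rw [show (fun j => if h : j = i then true else g ⟨j, h⟩) i = true by simp]
      simp only [if_true]
      rfl
    rw [hp, hr, hf, ht]

end Stmt17
namespace Stmt17

open Function

universe w
variable {A : Type w} {n : ℕ} {σ : Signature} [Alg σ A] {θ : Fin n → Set (A × A)}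

theorem mem_Delta_iff {γ : Cube (Fin n) A} :
    γ ∈ DeltaRel σ θ ↔ ∀ R : Set (Cube (Fin n) A),
      IsHCongruence σ R → (⋃ i, cubeSet i (θ i)) ⊆ R → γ ∈ R := by
  constructor
  · intro h R h1 h2
    exact Set.mem_sInter.1 h R ⟨h1, h2⟩
  · intro h
    exact Set.mem_sInter.2 fun R hR => h R hR.1 hR.2

theorem gens_subset_Delta : (⋃ i, cubeSet i (θ i)) ⊆ DeltaRel σ θ := by
  intro x hx
  exact mem_Delta_iff.2 fun R _ h2 => h2 hx

theorem cubeAt_mem_Delta (i : Fin n) {p : A × A} (hp : p ∈ θ i) :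
    cubeAt i p ∈ DeltaRel σ θ :=
  gens_subset_Delta (Set.mem_iUnion.2 ⟨i, ⟨p, hp, rfl⟩⟩)

theorem Delta_UC : UC (DeltaRel (A := A) σ θ) := by
  refine ⟨?_, ?_, ?_⟩
  · intro i b γ hγ
    exact mem_Delta_iff.2 fun R hR h2 =>
      (isHC_UC hR).1 i b γ (mem_Delta_iff.1 hγ R hR h2)
  · intro i γ hγ
    exact mem_Delta_iff.2 fun R hR h2 =>
      (isHC_UC hR).2.1 i γ (mem_Delta_iff.1 hγ R hR h2)
  · intro i γ δ hγ hδ hm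
    exact mem_Delta_iff.2 fun R hR h2 =>
      (isHC_UC hR).2.2 i γ δ (mem_Delta_iff.1 hγ R hR h2) (mem_Delta_iff.1 hδ R hR h2) hm

theorem Delta_compat : CompatCube σ (DeltaRel (A := A) σ θ) := by
  intro o γs h
  exact mem_Delta_iff.2 fun R hR h2 =>
    hR.1.1 o γs fun k => mem_Delta_iff.1 (h k) R hR h2

theorem const_mem_Delta [NeZero n] (hθ : ∀ i, IsCongruence σ (θ i)) (a : A) :
    (fun _ => a) ∈ DeltaRel (A := A) σ θ := by
  have h := cubeAt_mem_Delta (σ := σ) (θ := θ) (lastIdx n) ((hθ (lastIdx n)).1 a)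
  have heq : cubeAt (S := Fin n) (lastIdx n) ((a : A), a) = fun _ => a := by
    funext f
    show (bif f (lastIdx n) then a else a) = a
    cases f (lastIdx n) <;> rfl
  rwa [heq] at h

/-- The candidate for the hypercommutator: pairs whose commutator cube is
in `Δ`. -/
def comSet (σ : Signature) {A : Type w} [Alg σ A] (n : ℕ) (θ : Fin n → Set (A × A)) :
    Set (A × A) :=
  {p | comCube n p.1 p.2 ∈ DeltaRel σ θ}

theorem comCube_self (a : A) : comCube n a a = fun _ => a := by
  funext f
  by_cases h : ∀ i, f i = true
  · rw [comCube_pos _ _ h]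
  · rw [comCube_neg _ _ h]

theorem comSet_isCongruence [NeZero n] (hθ : ∀ i, IsCongruence σ (θ i)) :
    IsCongruence σ (comSet σ n θ) := by
  refine ⟨?_, ?_, ?_, ?_⟩
  · intro a
    show comCube n a a ∈ DeltaRel (A := A) σ θ
    rw [comCube_self]
    exact const_mem_Delta hθ a
  · intro a b hab
    show comCube n b a ∈ DeltaRel (A := A) σ θ
    cases n with
    | zero => exact absurd rfl (NeZero.ne 0)
    | succ m => exact T2 m _ Delta_UC hab
  · intro a b c hab hbc
    show comCube n a c ∈ DeltaRel (A := A) σ θ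
    exact T3 n _ Delta_UC hab hbc
  · intro o x y h
    show comCube n (Alg.interp (A := A) o x) (Alg.interp (A := A) o y) ∈ DeltaRel (A := A) σ θ
    have heq : comCube n (Alg.interp (A := A) o x) (Alg.interp (A := A) o y)
        = fun f => Alg.interp (A := A) o (fun k => comCube n (x k) (y k) f) := by
      funext f
      by_cases hc : ∀ i, f i = true
      · rw [comCube_pos _ _ hc]
        congr 1
        funext k
        rw [comCube_pos _ _ hc]
      · rw [comCube_neg _ _ hc]
        congr 1
        funext k
        rw [comCube_neg _ _ hc]
    rw [heq]
    exact Delta_compat o _ fun k => h k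

end Stmt17
namespace Stmt17

open Function

universe w
variable {A : Type w} {m : ℕ}

def toSub {m : ℕ} (f : Fin m → Bool) : {x : Fin (m+1) // x ≠ Fin.last m} → Bool :=
  fun x => f (x.val.castPred x.prop)

def ofSub {m : ℕ} (g : {x : Fin (m+1) // x ≠ Fin.last m} → Bool) : Fin m → Bool :=
  fun i => g ⟨Fin.castSucc i, (Fin.castSucc_lt_last i).ne⟩

theorem ofSub_toSub (f : Fin m → Bool) : ofSub (toSub f) = f := by
  funext i
  show f ((Fin.castSucc i).castPred _) = f i
  rw [Fin.castPred_castSucc]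

theorem toSub_ofSub (g : {x : Fin (m+1) // x ≠ Fin.last m} → Bool) :
    toSub (ofSub g) = g := by
  funext x
  have : (⟨Fin.castSucc (x.val.castPred x.prop),
      (Fin.castSucc_lt_last _).ne⟩ : {x : Fin (m+1) // x ≠ Fin.last m}) = x :=
    Subtype.ext (Fin.castSucc_castPred x.val x.prop)
  show g ⟨Fin.castSucc (x.val.castPred x.prop), _⟩ = g x
  rw [this]

theorem face_toSub (b : Bool) (γ : Cube (Fin (m+1)) A) (f : Fin m → Bool) :
    face (Fin.last m) b γ (toSub f) = γ (Fin.snoc f b) := by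
  show γ _ = γ _
  congr 1
  funext j
  induction j using Fin.lastCases with
  | last => simp
  | cast x =>
    rw [dif_neg (Fin.castSucc_lt_last x).ne, Fin.snoc_castSucc]
    show f ((Fin.castSucc x).castPred _) = f x
    rw [Fin.castPred_castSucc]

theorem toSub_top : toSub (topF m) = (fun _ => true) := by
  funext x; rfl

theorem toSub_eq_allTrue_iff {f : Fin m → Bool} :
    toSub f = (fun _ => true) ↔ f = topF m := by
  constructor
  · intro hc
    have := congrArg ofSub hc
    rw [ofSub_toSub] at this
    rw [this]
    funext i; rfl
  · intro h; rw [h]; exact toSub_top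

def subEquiv (m : ℕ) : (Fin m → Bool) ≃ ({x : Fin (m+1) // x ≠ Fin.last m} → Bool) :=
  ⟨toSub, ofSub, ofSub_toSub, toSub_ofSub⟩

theorem card_transfer (P : ({x : Fin (m+1) // x ≠ Fin.last m} → Bool) → Prop) :
    Nat.card {g // P g} = Nat.card {f : Fin m → Bool // P (toSub f)} :=
  (Nat.card_congr (Equiv.subtypeEquiv (subEquiv m) (fun _ => Iff.rfl))).symm

theorem card_ne_top (m : ℕ) :
    Nat.card {f : Fin m → Bool // f ≠ topF m} = 2 ^ m - 1 := by
  classical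
  rw [Nat.card_eq_fintype_card, Fintype.card_subtype_compl, Fintype.card_subtype_eq,
    Fintype.card_fun]
  simp

theorem pk_d1 {X : Type w} {R : Set (Cube (Fin (m+1)) X)} (hR : UC R) :
    ∀ Γ' ∈ pkSet R, (fun f => ((Γ' f).1, (Γ' f).1)) ∈ pkSet R := by
  intro Γ' hΓ'
  show upk _ ∈ R
  have heq : upk (fun f => ((Γ' f).1, (Γ' f).1))
      = fun g => upk Γ' (update g (Fin.last m) false) := by
    funext g
    show (if g (Fin.last m) = true then (Γ' (Fin.init g)).1 else (Γ' (Fin.init g)).1)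
        = upk Γ' (update g (Fin.last m) false)
    have h1 : upk Γ' (update g (Fin.last m) false) = (Γ' (Fin.init g)).1 := by
      show (if update g (Fin.last m) false (Fin.last m) = true then _ else _) = _
      rw [update_self]
      simp only [Bool.false_eq_true, if_false, init_update_last]
    rw [h1]
    cases g (Fin.last m) <;> simp
  rw [heq]
  exact hR.1 (Fin.last m) false _ hΓ'

variable {σ : Signature} [Alg σ A]

theorem com_of_supported_last {θ : Fin (m+1) → Set (A × A)}
    {γ : Cube (Fin (m+1)) A} (hγ : γ ∈ DeltaRel σ θ) {x y : A}
    (h : iSupported (Fin.last m) γ x y) :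
    comCube (m+1) x y ∈ DeltaRel σ θ := by
  obtain ⟨h1, h2, h3⟩ := h
  have hdiag : ∀ f, f ≠ topF m → (pk γ f).2 = (pk γ f).1 := by
    intro f hf
    have hne : toSub f ≠ (fun _ => true) := fun hc => hf (toSub_eq_allTrue_iff.1 hc)
    have heq := h3 (toSub f) hne
    rw [face_toSub, face_toSub] at heq
    show γ (Fin.snoc f true) = γ (Fin.snoc f false)
    exact heq.symm
  have hP := LemP m _ (Delta_UC (σ := σ) (θ := θ)).pkSet
    (pk_d1 (Delta_UC (σ := σ) (θ := θ))) (pk_mem hγ) hdiag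
  have htop : pk γ (topF m) = (x, y) := by
    unfold pk
    rw [← face_toSub false γ (topF m), ← face_toSub true γ (topF m), toSub_top, h1, h2]
  rw [htop] at hP
  exact com_mem_pkSet.1 hP

theorem comSet_centrality {k : ℕ} {θ : Fin (k+2) → Set (A × A)}
    (hθ : ∀ i, IsCongruence σ (θ i)) :
    Centrality (comSet σ (k+2) θ) (lastIdx (k+2)) (DeltaRel σ θ) := by
  classical
  rintro ⟨γ, hγ, hcard⟩
  have hlast : lastIdx (k+2) = Fin.last (k+1) := by
    apply Fin.ext
    simp [lastIdx, Fin.last]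
  rw [hlast] at hcard
  rw [card_transfer, Fintype.card_fin] at hcard
  have harith : 2 ^ (k + 2 - 1) - 1 = 2 ^ (k+1) - 1 := by norm_num
  rw [harith] at hcard
  set Q : (Fin (k+1) → Bool) → Prop :=
    fun f => pk γ f ∈ comSet σ (k+2) θ with hQ
  have hQiff : ∀ f, (face (Fin.last (k+1)) false γ (toSub f),
      face (Fin.last (k+1)) true γ (toSub f)) ∈ comSet σ (k+2) θ ↔ Q f := by
    intro f
    rw [face_toSub, face_toSub]
    exact Iff.rfl
  have hcard' : Nat.card {f : Fin (k+1) → Bool // Q f} = 2 ^ (k+1) - 1 := by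
    rw [← hcard]
    exact Nat.card_congr (Equiv.subtypeEquivRight fun f => (hQiff f).symm)
  have hcardF : (Finset.univ.filter Q).card = 2 ^ (k+1) - 1 := by
    rw [← Fintype.card_subtype, ← Nat.card_eq_fintype_card, hcard']
  -- there is a vertex not satisfying Q
  have hex : ∃ f₀, f₀ ∉ Finset.univ.filter Q := by
    by_contra hc
    push_neg at hc
    have : Finset.univ.filter Q = Finset.univ := by
      apply Finset.eq_univ_iff_forall.2
      intro f
      exact hc f
    rw [this, ← Fintype.card, Fintype.card_fun] at hcardF
    simp only [Fintype.card_bool, Fintype.card_fin] at hcardF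
    have hpos : 0 < 2 ^ (k+1) := Nat.pow_pos (by norm_num)
    omega
  obtain ⟨f₀, hf₀⟩ := hex
  have hsub : Finset.univ.filter Q ⊆ Finset.univ.erase f₀ := by
    intro f hf
    refine Finset.mem_erase.2 ⟨fun hc => hf₀ (hc ▸ hf), Finset.mem_univ f⟩
  have herase : (Finset.univ.erase f₀).card = 2 ^ (k+1) - 1 := by
    rw [Finset.card_erase_of_mem (Finset.mem_univ f₀), ← Fintype.card, Fintype.card_fun]
    simp
  have hFeq : Finset.univ.filter Q = Finset.univ.erase f₀ :=
    Finset.eq_of_subset_of_card_le hsub (by rw [herase, hcardF])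
  have hall : ∀ f, f ≠ f₀ → Q f := by
    intro f hf
    have : f ∈ Finset.univ.erase f₀ := Finset.mem_erase.2 ⟨hf, Finset.mem_univ f⟩
    rw [← hFeq] at this
    exact (Finset.mem_filter.1 this).2
  -- absorption
  have habs := ABS (pkSet (DeltaRel σ θ)) (Delta_UC (σ := σ) (θ := θ)).pkSet
    (pk_d1 (Delta_UC (σ := σ) (θ := θ))) (pk_mem hγ) f₀ ?_
  · have hQf₀ : Q f₀ := com_mem_pkSet.1 habs
    exact hf₀ (Finset.mem_filter.2 ⟨Finset.mem_univ f₀, hQf₀⟩)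
  · intro f hf
    exact com_mem_pkSet.2 (hall f hf)

theorem mem_hComm_of_com {n : ℕ} [NeZero n] {θ : Fin n → Set (A × A)}
    (hθ : ∀ i, IsCongruence σ (θ i)) {x y : A}
    (h : comCube n x y ∈ DeltaRel σ θ) : (x, y) ∈ hComm σ n θ := by
  classical
  cases n with
  | zero => exact absurd rfl (NeZero.ne 0)
  | succ m =>
    refine Set.mem_sInter.2 fun δ hδ => ?_
    obtain ⟨hcong, hcent⟩ := hδ
    by_contra hxy
    apply hcent
    refine ⟨comCube (m+1) x y, h, ?_⟩
    have hlast : lastIdx (m+1) = Fin.last m := by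
      apply Fin.ext
      simp [lastIdx, Fin.last]
    rw [hlast, card_transfer, Fintype.card_fin]
    have hiff : ∀ f : Fin m → Bool,
        (face (Fin.last m) false (comCube (m+1) x y) (toSub f),
         face (Fin.last m) true (comCube (m+1) x y) (toSub f)) ∈ δ ↔ f ≠ topF m := by
      intro f
      rw [face_toSub, face_toSub, com_snoc_false, com_snoc_true]
      by_cases hf : f = topF m
      · rw [if_pos hf]
        simp only [hf]
        constructor
        · intro hc; exact absurd hc hxy
        · intro hc; exact absurd rfl hc
      · rw [if_neg hf]
        constructor
        · intro _; exact hf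
        · intro _; exact hcong.1 x
    have := Nat.card_congr (Equiv.subtypeEquivRight hiff)
    rw [this, card_ne_top]
    simp

end Stmt17
namespace Stmt17

open Function

universe w
variable {A : Type w} {n : ℕ} {σ : Signature} [Alg σ A]

/-- Reindexing a cube along a permutation of the directions. -/
def rp (π : Equiv.Perm (Fin n)) (γ : Cube (Fin n) A) : Cube (Fin n) A :=
  fun f => γ (f ∘ π)

theorem comp_update (π : Equiv.Perm (Fin n)) (f : Fin n → Bool) (i : Fin n) (b : Bool) :
    (update f (π i) b) ∘ π = update (f ∘ π) i b := by
  funext j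
  by_cases h : j = i
  · subst h
    show update f (π j) b (π j) = _
    rw [update_self, update_self]
  · show update f (π i) b (π j) = _
    rw [update_of_ne (fun hc => h (π.injective hc)), update_of_ne h]
    rfl

theorem rp_mem_Delta {θ : Fin n → Set (A × A)} (π : Equiv.Perm (Fin n))
    {γ : Cube (Fin n) A} (hγ : γ ∈ DeltaRel σ θ) :
    rp π γ ∈ DeltaRel σ (fun i => θ (π.symm i)) := by
  set θ' : Fin n → Set (A × A) := fun i => θ (π.symm i) with hθ'
  set W : Set (Cube (Fin n) A) := {γ | rp π γ ∈ DeltaRel σ θ'} with hW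
  have hUCW : UC W := by
    refine ⟨?_, ?_, ?_⟩
    · intro i b γ hγ
      have h1 := (Delta_UC (σ := σ) (θ := θ')).1 (π i) b (rp π γ) hγ
      have heq : (fun f => rp π γ (update f (π i) b)) = rp π (fun f => γ (update f i b)) := by
        funext f
        show γ ((update f (π i) b) ∘ π) = γ (update (f ∘ π) i b)
        rw [comp_update]
      rwa [heq] at h1
    · intro i γ hγ
      have h1 := (Delta_UC (σ := σ) (θ := θ')).2.1 (π i) (rp π γ) hγ
      have heq : (fun f => rp π γ (update f (π i) (!(f (π i)))))
          = rp π (fun f => γ (update f i (!(f i)))) := by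
        funext f
        show γ ((update f (π i) (!(f (π i)))) ∘ π) = γ (update (f ∘ π) i (!((f ∘ π) i)))
        rw [comp_update]
        rfl
      rwa [heq] at h1
    · intro i γ δ hγ hδ hm
      have hm' : ∀ f, rp π γ (update f (π i) true) = rp π δ (update f (π i) false) := by
        intro f
        show γ ((update f (π i) true) ∘ π) = δ ((update f (π i) false) ∘ π)
        rw [comp_update, comp_update]
        exact hm (f ∘ π)
      have h1 := (Delta_UC (σ := σ) (θ := θ')).2.2 (π i) (rp π γ) (rp π δ) hγ hδ hm'
      have heq : (fun f => if f (π i) = true then rp π δ f else rp π γ f)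
          = rp π (fun f => if f i = true then δ f else γ f) := by
        funext f
        rfl
      rwa [heq] at h1
  have hcompatW : CompatCube σ W := by
    intro o γs h
    have h1 := Delta_compat (σ := σ) (θ := θ') o (fun k => rp π (γs k)) h
    have heq : (fun f => Alg.interp (A := A) o fun k => rp π (γs k) f)
        = rp π (fun f => Alg.interp (A := A) o fun k => γs k f) := by
      funext f
      rfl
    rwa [heq] at h1
  have hgens : (⋃ i, cubeSet i (θ i)) ⊆ W := by
    rintro x hx
    obtain ⟨i, p, hp, rfl⟩ : ∃ i p, p ∈ θ i ∧ cubeAt i p = x := by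
      obtain ⟨s, ⟨i, rfl⟩, hmem⟩ := hx
      obtain ⟨p, hp, rfl⟩ := hmem
      exact ⟨i, p, hp, rfl⟩
    show rp π (cubeAt i p) ∈ DeltaRel σ θ'
    have heq : rp π (cubeAt i p) = cubeAt (π i) p := by
      funext f
      rfl
    rw [heq]
    refine cubeAt_mem_Delta (σ := σ) (θ := θ') (π i) ?_
    show p ∈ θ (π.symm (π i))
    rw [Equiv.symm_apply_apply]
    exact hp
  have hsub : DeltaRel (A := A) σ θ ⊆ W :=
    Set.sInter_subset_of_mem ⟨UC_isHC hUCW hcompatW, hgens⟩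
  exact hsub hγ

theorem rp_com (π : Equiv.Perm (Fin n)) (x y : A) :
    rp π (comCube n x y) = comCube n x y := by
  funext f
  show comCube n x y (fun i => f (π i)) = comCube n x y f
  by_cases h : ∀ i, f i = true
  · rw [comCube_pos _ _ (fun i => h (π i)), comCube_pos _ _ h]
  · rw [comCube_neg _ _ (fun hc => h (fun j => by
      have := hc (π.symm j)
      simpa using this)), comCube_neg _ _ h]

theorem com_Delta_perm {θ : Fin n → Set (A × A)} (π : Equiv.Perm (Fin n)) (x y : A) :
    comCube n x y ∈ DeltaRel (A := A) σ θ
      ↔ comCube n x y ∈ DeltaRel (A := A) σ (fun i => θ (π.symm i)) := by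
  constructor
  · intro h
    have := rp_mem_Delta π h
    rwa [rp_com] at this
  · intro h
    have := rp_mem_Delta π.symm h
    rw [rp_com] at this
    have heq : (fun i => (fun i => θ (π.symm i)) (π.symm.symm i)) = θ := by
      funext i
      simp
    rwa [heq] at this

theorem iSupported_rp {i j : Fin n} (π : Equiv.Perm (Fin n)) (hij : π i = j)
    (γ : Cube (Fin n) A) {x y : A} (h : iSupported i γ x y) :
    iSupported j (rp π γ) x y := by
  have hπ' : ∀ (xx : {z : Fin n // z ≠ i}), π xx.val ≠ j := by
    intro xx hc
    exact xx.prop (π.injective (hc.trans hij.symm))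
  have hface : ∀ (b : Bool) (g : {z : Fin n // z ≠ j} → Bool),
      face j b (rp π γ) g = face i b γ (fun xx => g ⟨π xx.val, hπ' xx⟩) := by
    intro b g
    show γ _ = γ _
    congr 1
    funext l
    show (if h : π l = j then b else g ⟨π l, h⟩) = if h : l = i then b else _
    by_cases hl : l = i
    · subst hl
      rw [dif_pos hij, dif_pos rfl]
    · rw [dif_neg (fun hc => hl (π.injective (hc.trans hij.symm))), dif_neg hl]
  obtain ⟨h1, h2, h3⟩ := h
  refine ⟨?_, ?_, ?_⟩
  · rw [hface]
    exact h1
  · rw [hface]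
    exact h2
  · intro g hg
    rw [hface, hface]
    refine h3 _ (fun hc => hg ?_)
    funext z
    have hz : π.symm z.val ≠ i := fun hzc => z.prop (by
      have h4 := congrArg π hzc
      rw [Equiv.apply_symm_apply] at h4
      rw [h4, hij])
    have := congrFun hc ⟨π.symm z.val, hz⟩
    simp only at this
    have hval : (⟨π (π.symm z.val), hπ' ⟨π.symm z.val, hz⟩⟩ : {z : Fin n // z ≠ j}) = z :=
      Subtype.ext (Equiv.apply_symm_apply π z.val)
    rwa [hval] at this

end Stmt17
namespace Stmt17

open Function

universe w
variable {A : Type w} {σ : Signature} [Alg σ A]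

theorem hComm_eq_comSet {k : ℕ} {θ : Fin (k+2) → Set (A × A)}
    (hθ : ∀ i, IsCongruence σ (θ i)) :
    hComm σ (k+2) θ = comSet σ (k+2) θ := by
  apply Set.Subset.antisymm
  · exact Set.sInter_subset_of_mem ⟨comSet_isCongruence hθ, comSet_centrality hθ⟩
  · rintro ⟨a, b⟩ hp
    exact mem_hComm_of_com hθ hp

end Stmt17

/-- relational characterization of the `n`-ary hypercommutator via
commutator cubes and `(i)`-support, and its symmetry under permutations. -/
theorem stmt17 {A : Type u} (σ : Signature) [Alg σ A] (n : ℕ) [NeZero n]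
    (hn : 2 ≤ n) (θ : Fin n → Set (A × A)) (hθ : ∀ i, IsCongruence σ (θ i)) :
    (∀ x y : A,
      ((x, y) ∈ hComm σ n θ ↔ comCube n x y ∈ DeltaRel σ θ) ∧
      ((x, y) ∈ hComm σ n θ ↔
        ∃ (i : Fin n) (γ : Cube (Fin n) A), γ ∈ DeltaRel σ θ ∧ iSupported i γ x y)) ∧
    (∀ π : Equiv.Perm (Fin n), hComm σ n θ = hComm σ n (θ ∘ π)) := by
  obtain ⟨k, rfl⟩ : ∃ k, n = k + 2 := ⟨n - 2, by omega⟩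
  have hlast : lastIdx (k+2) = Fin.last (k+1) := by
    apply Fin.ext
    simp [lastIdx, Fin.last]
  have hmain := Stmt17.hComm_eq_comSet (σ := σ) (θ := θ) hθ
  constructor
  · intro x y
    have h1 : (x, y) ∈ hComm σ (k+2) θ ↔ comCube (k+2) x y ∈ DeltaRel σ θ := by
      rw [hmain]
      exact Iff.rfl
    refine ⟨h1, ?_⟩
    constructor
    · intro h
      refine ⟨lastIdx (k+2), comCube (k+2) x y, h1.1 h, ?_⟩
      rw [hlast]
      refine ⟨?_, ?_, ?_⟩
      · rw [← Stmt17.toSub_top, Stmt17.face_toSub, Stmt17.com_snoc_false]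
      · rw [← Stmt17.toSub_top, Stmt17.face_toSub, Stmt17.com_snoc_true, if_pos rfl]
      · intro f hf
        have hne : ¬ Stmt17.ofSub f = Stmt17.topF (k+1) := by
          intro hc
          exact hf (by rw [← Stmt17.toSub_ofSub f, hc, Stmt17.toSub_top])
        rw [← Stmt17.toSub_ofSub f, Stmt17.face_toSub, Stmt17.face_toSub,
          Stmt17.com_snoc_false, Stmt17.com_snoc_true, if_neg hne]
    · rintro ⟨i, γ, hγ, hsup⟩
      apply h1.2
      by_cases hi : i = lastIdx (k+2)
      · subst hi
        rw [hlast] at hsup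
        exact Stmt17.com_of_supported_last hγ hsup
      · set π : Equiv.Perm (Fin (k+2)) := Equiv.swap i (lastIdx (k+2)) with hπ
        have hγ' := Stmt17.rp_mem_Delta (σ := σ) π hγ
        have hsup' : iSupported (lastIdx (k+2)) (Stmt17.rp π γ) x y :=
          Stmt17.iSupported_rp π (by rw [hπ]; exact Equiv.swap_apply_left i _) γ hsup
        rw [hlast] at hsup'
        have hcom := Stmt17.com_of_supported_last (σ := σ)
          (θ := fun i' => θ (π.symm i')) hγ' hsup'
        exact (Stmt17.com_Delta_perm (σ := σ) (θ := θ) π x y).2 hcom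
  · intro π
    rw [hmain, Stmt17.hComm_eq_comSet (σ := σ) (θ := θ ∘ π) (fun i => hθ (π i))]
    ext p
    obtain ⟨a, b⟩ := p
    show comCube _ a b ∈ DeltaRel σ θ ↔ comCube _ a b ∈ DeltaRel σ (θ ∘ π)
    have hiff := Stmt17.com_Delta_perm (σ := σ) (θ := θ) π.symm a b
    have heq : (fun i => θ (π.symm.symm i)) = θ ∘ π := by
      funext i
      simp
    rwa [heq] at hiff
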